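/- For all integers k ≥ 4 and n ≥ m ≥ 1 with n odd, there exists a k-edge-coloring of the complete graph on 5(n-1)/2 + m(k-3) + 1 vertices containing no rainbow triangle and no monochromatic copy of the double star S(n,m). -/

import Mathlib

open Finset

/-- A symmetric edge-coloring of a complete graph, given as a function on ordered
pairs of vertices. -/
def IsSymmColoring {V C : Type*} (c : V → V → C) : Prop := ∀ u v, c u v = c v u

/-- The coloring `c` contains a rainbow triangle: three vertices whose three
connecting edges get three distinct colors. -/
def HasRainbowTriangle {V C : Type*} (c : V → V → C) : Prop :=
  ∃ u v w : V, u ≠ v ∧ u ≠ w ∧ v ≠ w ∧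
    c u v ≠ c u w ∧ c u v ≠ c v w ∧ c u w ≠ c v w

/-- The coloring `c` contains a monochromatic triangle. -/
def HasMonoTriangle {V C : Type*} (c : V → V → C) : Prop :=
  ∃ u v w : V, u ≠ v ∧ u ≠ w ∧ v ≠ w ∧ c u v = c u w ∧ c u v = c v w

/-- The coloring `c` contains a monochromatic copy of the double star `S(n,m)`:
two adjacent centers `u, v`, a set `A` of `n` further leaves at `u` and a set `B`
of `m` further leaves at `v`, all edges in one color. -/
def HasMonoDoubleStar {V C : Type*} (c : V → V → C) (n m : ℕ) : Prop :=
  ∃ (u v : V) (A B : Finset V) (col : C),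
    u ≠ v ∧ A.card = n ∧ B.card = m ∧ Disjoint A B ∧
    u ∉ A ∧ u ∉ B ∧ v ∉ A ∧ v ∉ B ∧
    c u v = col ∧ (∀ a ∈ A, c u a = col) ∧ (∀ b ∈ B, c v b = col)

/-- Every `k`-edge-coloring of the complete graph on `N` vertices contains a
rainbow triangle or a monochromatic `S(n,m)` (so `gr_k(K_3 : S(n,m)) ≤ N`). -/
def grHolds (k n m N : ℕ) : Prop :=
  ∀ c : Fin N → Fin N → Fin k, IsSymmColoring c →
    HasRainbowTriangle c ∨ HasMonoDoubleStar c n m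

/-- There is a `k`-edge-coloring of the complete graph on `N` vertices with no
rainbow triangle and no monochromatic `S(n,m)` (so `gr_k(K_3 : S(n,m)) > N`). -/
def grAvoid (k n m N : ℕ) : Prop :=
  ∃ c : Fin N → Fin N → Fin k, IsSymmColoring c ∧
    ¬ HasRainbowTriangle c ∧ ¬ HasMonoDoubleStar c n m


namespace Stmt4Aux

/-- label of vertex `x`: residue mod 5 for base vertices, `5 + group index` otherwise. -/
def lab (t m x : ℕ) : ℕ :=
  if x < 5*t+1 then x % 5 else 5 + (x - (5*t+1)) / m

/-- pentagon color between two distinct labels `< 5`. -/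
def pcol (a b : ℕ) : ℕ :=
  if (a+1) % 5 = b ∨ (b+1) % 5 = a then 0 else 1

/-- color between labels. -/
def lcol (a b : ℕ) : ℕ :=
  if a = b then 2
  else if 5 ≤ max a b then max a b - 2
  else pcol a b

lemma pcol_comm (a b : ℕ) : pcol a b = pcol b a := by
  unfold pcol; exact if_congr or_comm rfl rfl

lemma pcol_lt (a b : ℕ) : pcol a b < 2 := by unfold pcol; split <;> omega

lemma lcol_comm (a b : ℕ) : lcol a b = lcol b a := by
  unfold lcol
  rcases eq_or_ne a b with rfl | h
  · simp
  · rw [if_neg h, if_neg h.symm, Nat.max_comm, pcol_comm]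

lemma lab_le {t m k x : ℕ} (hm : 1 ≤ m) (hk : 4 ≤ k) (hx : x < 5*t + m*(k-3) + 1) :
    lab t m x ≤ k + 1 := by
  have hc : m * (k-3) = (k-3) * m := Nat.mul_comm _ _
  unfold lab; split
  · have : x % 5 < 5 := Nat.mod_lt x (by norm_num)
    omega
  · have h1 : x - (5*t+1) < (k-3) * m := by omega
    have h2 : (x - (5*t+1)) / m < k - 3 := by
      rw [Nat.div_lt_iff_lt_mul hm]; omega
    omega

lemma lcol_lt {a b k : ℕ} (hk : 4 ≤ k) (ha : a ≤ k+1) (hb : b ≤ k+1) : lcol a b < k := by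
  have hp := pcol_lt a b
  have hmx : max a b ≤ k + 1 := max_le ha hb
  unfold lcol; split_ifs <;> omega

lemma lcol_cases (a b : ℕ) :
    (a = b ∧ lcol a b = 2) ∨
    (a ≠ b ∧ 5 ≤ a ∧ b < a ∧ lcol a b = a - 2) ∨
    (a ≠ b ∧ 5 ≤ b ∧ a < b ∧ lcol a b = b - 2) ∨
    (a ≠ b ∧ a < 5 ∧ b < 5 ∧ lcol a b = pcol a b) := by
  have hp := pcol_lt a b
  unfold lcol
  rw [Nat.max_def]
  split_ifs <;> omega

lemma lcol_eq_two {a b : ℕ} (h : lcol a b = 2) : a = b := by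
  have hp := pcol_lt a b
  rcases lcol_cases a b with ⟨h1, _⟩ | ⟨_, _, _, h2⟩ | ⟨_, _, _, h2⟩ | ⟨_, _, _, h2⟩ <;> omega

lemma lcol_small {a b : ℕ} (h : lcol a b < 2) :
    a ≠ b ∧ a < 5 ∧ b < 5 ∧ lcol a b = pcol a b := by
  rcases lcol_cases a b with ⟨h1, h2⟩ | ⟨_, _, _, h2⟩ | ⟨_, _, _, h2⟩ | h2 <;> first
    | exact h2 | omega

lemma lcol_big {a b e : ℕ} (he : 5 ≤ e) (hae : a < e) (h : lcol a b = e - 2) : b = e := by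
  have hp := pcol_lt a b
  rcases lcol_cases a b with ⟨h1, h2⟩ | ⟨_, _, _, h2⟩ | ⟨_, _, _, h2⟩ | ⟨_, _, _, h2⟩ <;> omega

lemma lcol_gt {a b : ℕ} (h5 : 5 ≤ a) (h : b < a) : lcol a b = a - 2 := by
  unfold lcol
  rw [if_neg (by omega), Nat.max_eq_left h.le, if_pos h5]

lemma lcol_pent {a b : ℕ} (ha : a < 5) (hb : b < 5) (hne : a ≠ b) : lcol a b = pcol a b := by
  have : max a b < 5 := max_lt ha hb
  unfold lcol
  rw [if_neg hne, if_neg (by omega)]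

lemma pcol_pigeon (a b d : ℕ) :
    pcol a b = pcol a d ∨ pcol a b = pcol b d ∨ pcol a d = pcol b d := by
  have h1 := pcol_lt a b; have h2 := pcol_lt a d; have h3 := pcol_lt b d; omega

lemma no_rainbow (a b d : ℕ) :
    lcol a b = lcol a d ∨ lcol a b = lcol b d ∨ lcol a d = lcol b d := by
  by_cases hab : a = b
  · subst hab; right; right; rfl
  by_cases had : a = d
  · subst had; right; left; exact lcol_comm a b
  by_cases hbd : b = d
  · subst hbd; left; rfl
  have htri : (b < a ∧ d < a) ∨ (a < b ∧ d < b) ∨ (a < d ∧ b < d) := by omega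
  rcases htri with ⟨h1, h2⟩ | ⟨h1, h2⟩ | ⟨h1, h2⟩
  · by_cases h5 : 5 ≤ a
    · left; rw [lcol_gt h5 h1, lcol_gt h5 h2]
    · rw [lcol_pent (by omega) (by omega) hab, lcol_pent (by omega) (by omega) had,
        lcol_pent (by omega) (by omega) hbd]
      exact pcol_pigeon a b d
  · by_cases h5 : 5 ≤ b
    · right; left
      rw [lcol_comm a b, lcol_gt h5 h1, lcol_gt h5 h2]
    · rw [lcol_pent (by omega) (by omega) hab, lcol_pent (by omega) (by omega) had,
        lcol_pent (by omega) (by omega) hbd]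
      exact pcol_pigeon a b d
  · by_cases h5 : 5 ≤ d
    · right; right
      rw [lcol_comm a d, lcol_comm b d, lcol_gt h5 h1, lcol_gt h5 h2]
    · rw [lcol_pent (by omega) (by omega) hab, lcol_pent (by omega) (by omega) had,
        lcol_pent (by omega) (by omega) hbd]
      exact pcol_pigeon a b d

lemma lab_lt5 {t m x i : ℕ} (hi : i < 5) (h : lab t m x = i) :
    x < 5*t+1 ∧ x % 5 = i := by
  unfold lab at h
  by_cases hx : x < 5*t+1
  · rw [if_pos hx] at h; exact ⟨hx, h⟩
  · rw [if_neg hx] at h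
    have h5 : 5 ≤ 5 + (x - (5*t+1)) / m := Nat.le_add_right 5 _
    omega

lemma lab_ge5 {t m x i : ℕ} (hi : 5 ≤ i) (h : lab t m x = i) :
    5*t+1 ≤ x ∧ (x - (5*t+1)) / m = i - 5 := by
  unfold lab at h
  by_cases hx : x < 5*t+1
  · rw [if_pos hx] at h
    have : x % 5 < 5 := Nat.mod_lt x (by norm_num)
    omega
  · rw [if_neg hx] at h
    refine ⟨by omega, ?_⟩
    rw [← h, Nat.add_sub_cancel_left]

lemma card_fib_lt5 {N t m i : ℕ} (hi : i < 5) :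
    ((univ : Finset (Fin N)).filter (fun x => lab t m x.val = i)).card
      ≤ t + if i = 0 then 1 else 0 := by
  classical
  have h : ((univ : Finset (Fin N)).filter (fun x => lab t m x.val = i)).card
      ≤ (Finset.range (t + if i = 0 then 1 else 0)).card := by
    apply Finset.card_le_card_of_injOn (fun x => x.val / 5)
    · intro x hx
      simp only [Finset.mem_coe, Finset.mem_filter, Finset.mem_univ, true_and] at hx
      obtain ⟨h1, h2⟩ := lab_lt5 hi hx
      simp only [Finset.mem_coe, Finset.mem_range]
      split <;> omega
    · intro x hx y hy hxy
      simp only [Finset.coe_filter, Finset.mem_univ, true_and, Set.mem_setOf_eq] at hx hy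
      obtain ⟨hx1, hx2⟩ := lab_lt5 hi hx
      obtain ⟨hy1, hy2⟩ := lab_lt5 hi hy
      have hxy' : x.val / 5 = y.val / 5 := hxy
      apply Fin.ext
      omega
  simpa using h

lemma card_fib_ge5 {N t m i : ℕ} (hm : 1 ≤ m) (hi : 5 ≤ i) :
    ((univ : Finset (Fin N)).filter (fun x => lab t m x.val = i)).card ≤ m := by
  classical
  have h : ((univ : Finset (Fin N)).filter (fun x => lab t m x.val = i)).card
      ≤ (Finset.range m).card := by
    apply Finset.card_le_card_of_injOn (fun x => (x.val - (5*t+1)) % m)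
    · intro x hx
      simp only [Finset.mem_coe, Finset.mem_range]
      exact Nat.mod_lt _ hm
    · intro x hx y hy hxy
      simp only [Finset.coe_filter, Finset.mem_univ, true_and, Set.mem_setOf_eq] at hx hy
      obtain ⟨hx1, hx2⟩ := lab_ge5 hi hx
      obtain ⟨hy1, hy2⟩ := lab_ge5 hi hy
      have hxy' : (x.val - (5*t+1)) % m = (y.val - (5*t+1)) % m := hxy
      have hdiv : (x.val - (5*t+1)) / m = (y.val - (5*t+1)) / m := by rw [hx2, hy2]
      have e1 : x.val - (5*t+1) = y.val - (5*t+1) := by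
        calc x.val - (5*t+1) = m * ((x.val - (5*t+1)) / m) + (x.val - (5*t+1)) % m :=
              (Nat.div_add_mod _ m).symm
          _ = m * ((y.val - (5*t+1)) / m) + (y.val - (5*t+1)) % m := by rw [hdiv, hxy']
          _ = y.val - (5*t+1) := Nat.div_add_mod _ m
      apply Fin.ext
      omega
  simpa using h

lemma T_card {a b : ℕ} (ha : a < 5) (hb : b < 5) :
    ((Finset.range 5).filter (fun b' => b' ≠ a ∧ pcol a b' = pcol a b)).card ≤ 2 := by
  interval_cases a <;> interval_cases b <;> decide

end Stmt4Aux

/-- For k ≥ 4, n ≥ m ≥ 1, n odd: a rainbow-triangle-free k-coloring of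
`K_{5(n-1)/2 + m(k-3) + 1}` with no monochromatic `S(n,m)`. -/
theorem stmt_4 (n m k : ℕ) (hm : 1 ≤ m) (hmn : m ≤ n) (hk : 4 ≤ k) (hn : Odd n) :
    grAvoid k n m (5 * ((n - 1) / 2) + m * (k - 3) + 1) := by
  obtain ⟨t, ht⟩ := hn
  have htn : (n - 1) / 2 = t := by omega
  have hn2 : n = 2 * t + 1 := by omega
  rw [htn]
  refine ⟨fun u v => ⟨Stmt4Aux.lcol (Stmt4Aux.lab t m u.val) (Stmt4Aux.lab t m v.val),
      Stmt4Aux.lcol_lt hk (Stmt4Aux.lab_le hm hk u.isLt) (Stmt4Aux.lab_le hm hk v.isLt)⟩,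
    ?_, ?_, ?_⟩
  · -- symmetric
    intro u v
    exact Fin.ext (Stmt4Aux.lcol_comm _ _)
  · -- no rainbow triangle
    rintro ⟨u, v, w, -, -, -, h1, h2, h3⟩
    have h1' : Stmt4Aux.lcol (Stmt4Aux.lab t m u.val) (Stmt4Aux.lab t m v.val)
        ≠ Stmt4Aux.lcol (Stmt4Aux.lab t m u.val) (Stmt4Aux.lab t m w.val) :=
      fun h => h1 (Fin.ext h)
    have h2' : Stmt4Aux.lcol (Stmt4Aux.lab t m u.val) (Stmt4Aux.lab t m v.val)
        ≠ Stmt4Aux.lcol (Stmt4Aux.lab t m v.val) (Stmt4Aux.lab t m w.val) :=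
      fun h => h2 (Fin.ext h)
    have h3' : Stmt4Aux.lcol (Stmt4Aux.lab t m u.val) (Stmt4Aux.lab t m w.val)
        ≠ Stmt4Aux.lcol (Stmt4Aux.lab t m v.val) (Stmt4Aux.lab t m w.val) :=
      fun h => h3 (Fin.ext h)
    rcases Stmt4Aux.no_rainbow (Stmt4Aux.lab t m u.val) (Stmt4Aux.lab t m v.val)
        (Stmt4Aux.lab t m w.val) with h | h | h
    · exact h1' h
    · exact h2' h
    · exact h3' h
  · -- no monochromatic double star
    rintro ⟨u, v, A, B, col, huv, hA, hB, hAB, huA, huB, hvA, hvB, hcuv, hcA, hcB⟩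
    have hval : Stmt4Aux.lcol (Stmt4Aux.lab t m u.val) (Stmt4Aux.lab t m v.val) = col.val :=
      congrArg Fin.val hcuv
    have hAval : ∀ x ∈ A,
        Stmt4Aux.lcol (Stmt4Aux.lab t m u.val) (Stmt4Aux.lab t m x.val) = col.val :=
      fun x hx => congrArg Fin.val (hcA x hx)
    have hBval : ∀ x ∈ B,
        Stmt4Aux.lcol (Stmt4Aux.lab t m v.val) (Stmt4Aux.lab t m x.val) = col.val :=
      fun x hx => congrArg Fin.val (hcB x hx)
    rcases Stmt4Aux.lcol_cases (Stmt4Aux.lab t m u.val) (Stmt4Aux.lab t m v.val) with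
      ⟨heq, h2⟩ | ⟨hne, ha5, hba, h2⟩ | ⟨hne, hb5, hab, h2⟩ | ⟨hne, ha5, hb5, h2⟩
    · -- green case: everything in one fiber
      rw [hval] at h2
      have hsub : (A ∪ B) ∪ {u, v} ⊆
          univ.filter (fun x => Stmt4Aux.lab t m x.val = Stmt4Aux.lab t m u.val) := by
        intro x hx
        simp only [Finset.mem_union, Finset.mem_insert, Finset.mem_singleton] at hx
        simp only [Finset.mem_filter, Finset.mem_univ, true_and]
        rcases hx with (hx | hx) | hx | hx
        · exact (Stmt4Aux.lcol_eq_two (by rw [hAval x hx, h2])).symm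
        · have := Stmt4Aux.lcol_eq_two (h := by rw [hBval x hx, h2])
          rw [← this, ← heq]
        · rw [hx]
        · rw [hx, ← heq]
      have hd2 : Disjoint (A ∪ B) ({u, v} : Finset _) := by
        rw [Finset.disjoint_right]
        intro x hx
        simp only [Finset.mem_insert, Finset.mem_singleton] at hx
        rcases hx with rfl | rfl <;> simp [Finset.mem_union, huA, huB, hvA, hvB]
      have hcard : ((A ∪ B) ∪ {u, v}).card = n + m + 2 := by
        rw [Finset.card_union_of_disjoint hd2, Finset.card_union_of_disjoint hAB, hA, hB,
          Finset.card_insert_of_notMem (by simp [huv]), Finset.card_singleton]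
      have hle := Finset.card_le_card hsub
      rw [hcard] at hle
      by_cases h5 : Stmt4Aux.lab t m u.val < 5
      · have hb := Stmt4Aux.card_fib_lt5
          (N := 5 * t + m * (k - 3) + 1) (t := t) (m := m) h5
        have hb' : ((univ : Finset (Fin (5 * t + m * (k - 3) + 1))).filter
            (fun x => Stmt4Aux.lab t m x.val = Stmt4Aux.lab t m u.val)).card ≤ t + 1 := by
          refine le_trans hb ?_
          split <;> omega
        omega
      · have hb := Stmt4Aux.card_fib_ge5
          (N := 5 * t + m * (k - 3) + 1) (t := t) hm (by omega :
            5 ≤ Stmt4Aux.lab t m u.val)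
        omega
    · -- u in a group, its color: B ∪ {u} inside u's fiber
      rw [hval] at h2
      have hsub : insert u B ⊆
          univ.filter (fun x => Stmt4Aux.lab t m x.val = Stmt4Aux.lab t m u.val) := by
        intro x hx
        simp only [Finset.mem_insert] at hx
        simp only [Finset.mem_filter, Finset.mem_univ, true_and]
        rcases hx with rfl | hx
        · rfl
        · exact Stmt4Aux.lcol_big ha5 hba (by rw [hBval x hx, h2])
      have hcard : (insert u B).card = m + 1 := by
        rw [Finset.card_insert_of_notMem huB, hB]
      have hle := Finset.card_le_card hsub
      rw [hcard] at hle
      have hb := Stmt4Aux.card_fib_ge5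
        (N := 5 * t + m * (k - 3) + 1) (t := t) hm ha5
      omega
    · -- v in a group, its color: A ∪ {v} inside v's fiber
      rw [hval] at h2
      have hsub : insert v A ⊆
          univ.filter (fun x => Stmt4Aux.lab t m x.val = Stmt4Aux.lab t m v.val) := by
        intro x hx
        simp only [Finset.mem_insert] at hx
        simp only [Finset.mem_filter, Finset.mem_univ, true_and]
        rcases hx with rfl | hx
        · rfl
        · exact Stmt4Aux.lcol_big hb5 hab (by rw [hAval x hx, h2])
      have hcard : (insert v A).card = n + 1 := by
        rw [Finset.card_insert_of_notMem hvA, hA]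
      have hle := Finset.card_le_card hsub
      rw [hcard] at hle
      have hb := Stmt4Aux.card_fib_ge5
        (N := 5 * t + m * (k - 3) + 1) (t := t) hm hb5
      omega
    · -- pentagon case: A ∪ {v} inside the union of the two pentagon neighbour fibers
      rw [hval] at h2
      have hcolsm : (col : Fin k).val < 2 := by
        rw [h2]; exact Stmt4Aux.pcol_lt _ _
      set T : Finset ℕ := (Finset.range 5).filter
        (fun b' => b' ≠ Stmt4Aux.lab t m u.val ∧
          Stmt4Aux.pcol (Stmt4Aux.lab t m u.val) b'
            = Stmt4Aux.pcol (Stmt4Aux.lab t m u.val) (Stmt4Aux.lab t m v.val)) with hT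
      have hsub : insert v A ⊆
          univ.filter (fun x => Stmt4Aux.lab t m x.val ∈ T) := by
        intro x hx
        simp only [Finset.mem_insert] at hx
        simp only [Finset.mem_filter, Finset.mem_univ, true_and, hT, Finset.mem_range]
        rcases hx with rfl | hx
        · exact ⟨hb5, Ne.symm hne, rfl⟩
        · have hx2 : Stmt4Aux.lcol (Stmt4Aux.lab t m u.val) (Stmt4Aux.lab t m x.val) < 2 := by
            rw [hAval x hx]; exact hcolsm
          obtain ⟨hne', hu5, hx5, heqp⟩ := Stmt4Aux.lcol_small hx2
          refine ⟨hx5, Ne.symm hne', ?_⟩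
          rw [← heqp, hAval x hx]; exact h2
      have hcard : (insert v A).card = n + 1 := by
        rw [Finset.card_insert_of_notMem hvA, hA]
      have hle := Finset.card_le_card hsub
      rw [hcard] at hle
      have hFsub : (univ.filter (fun x : Fin (5 * t + m * (k - 3) + 1) =>
          Stmt4Aux.lab t m x.val ∈ T)) ⊆
          T.biUnion (fun i => univ.filter (fun x => Stmt4Aux.lab t m x.val = i)) := by
        intro x hx
        simp only [Finset.mem_filter, Finset.mem_univ, true_and] at hx
        rw [Finset.mem_biUnion]
        exact ⟨_, hx, by simp⟩
      have hle2 := Finset.card_le_card hFsub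
      have hle3 := Finset.card_biUnion_le (s := T)
        (t := fun i => (univ : Finset (Fin (5 * t + m * (k - 3) + 1))).filter
          (fun x => Stmt4Aux.lab t m x.val = i))
      have hsum1 : ∑ i ∈ T,
          ((univ : Finset (Fin (5 * t + m * (k - 3) + 1))).filter
            (fun x => Stmt4Aux.lab t m x.val = i)).card
          ≤ ∑ i ∈ T, (t + if i = 0 then 1 else 0) := by
        apply Finset.sum_le_sum
        intro i hi
        have hi5 : i < 5 := by
          rw [hT] at hi
          simpa using (Finset.mem_filter.mp hi).1
        exact Stmt4Aux.card_fib_lt5 hi5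
      have hsum2 : ∑ i ∈ T, (t + if i = 0 then 1 else 0)
          = T.card * t + ∑ i ∈ T, (if i = 0 then 1 else 0) := by
        rw [Finset.sum_add_distrib, Finset.sum_const, smul_eq_mul]
      have hsum3 : (∑ i ∈ T, if i = 0 then 1 else 0) ≤ 1 := by
        rw [Finset.sum_ite_eq' T 0 (fun _ => 1)]
        split <;> omega
      have hT2 : T.card ≤ 2 := Stmt4Aux.T_card ha5 hb5
      have hmul : T.card * t ≤ 2 * t := Nat.mul_le_mul_right t hT2
      omega
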